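/- For any N×N complex matrix B, real ℓ > 0, and exponents 2 ≤ p ≤ q ≤ ∞, the ℓ-weighted Schatten norms satisfy |||B|||_{p,ℓ} ≲ |||B|||_{q,ℓ}, i.e. there is a constant C (independent of N, ℓ, B) with |||B|||_{p,ℓ} ≤ C |||B|||_{q,ℓ}. -/

import Mathlib

open Matrix MeasureTheory Asymptotics
open scoped ComplexOrder BigOperators

/-- Normalized trace `⟨M⟩ = N⁻¹ Tr M`. -/
noncomputable def ntr {N : ℕ} (M : Matrix (Fin N) (Fin N) ℂ) : ℂ :=
  (N : ℂ)⁻¹ * M.trace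

/-- `|A| = (A Aᴴ)^{1/2}`. -/
noncomputable def matAbs {N : ℕ} (A : Matrix (Fin N) (Fin N) ℂ) : Matrix (Fin N) (Fin N) ℂ :=
  (Matrix.posSemidef_self_mul_conjTranspose A).1.eigenvectorUnitary.1 *
    diagonal ((↑) ∘ Real.sqrt ∘ (Matrix.posSemidef_self_mul_conjTranspose A).1.eigenvalues) *
    (star (Matrix.posSemidef_self_mul_conjTranspose A).1.eigenvectorUnitary : Matrix (Fin N) (Fin N) ℂ)

/-- Euclidean operator norm of a matrix. -/
noncomputable def opNorm {N : ℕ} (A : Matrix (Fin N) (Fin N) ℂ) : ℝ :=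
  ‖Matrix.toEuclideanCLM (𝕜 := ℂ) A‖

/-- Normalized `p`-th Schatten norm `⟨|A|^p⟩^{1/p}`. -/
noncomputable def schatten {N : ℕ} (p : ℕ) (A : Matrix (Fin N) (Fin N) ℂ) : ℝ :=
  (ntr (matAbs A ^ p)).re ^ ((p : ℝ)⁻¹)

/-- The `ℓ`-weighted `(2,p)`-Schatten norm, `p ∈ [2,∞]` (`p = ⊤` uses the operator norm). -/
noncomputable def wnorm {N : ℕ} (p : ℕ∞) (ℓ : ℝ) (A : Matrix (Fin N) (Fin N) ℂ) : ℝ :=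
  p.recTopCoe (schatten 2 A / ℓ ^ ((2:ℝ)⁻¹) + opNorm A)
    (fun q => schatten 2 A / ℓ ^ ((2:ℝ)⁻¹) + schatten q A / ℓ ^ ((q : ℝ)⁻¹))

/-- Resolvent `G(ζ) = (W - ζ)⁻¹`. -/
noncomputable def resOf {N : ℕ} (W : Matrix (Fin N) (Fin N) ℂ) (ζ : ℂ) :
    Matrix (Fin N) (Fin N) ℂ :=
  (W - ζ • (1 : Matrix (Fin N) (Fin N) ℂ))⁻¹

/-- `Im G = (G - Gᴴ)/(2i)`. -/
noncomputable def imPart {N : ℕ} (G : Matrix (Fin N) (Fin N) ℂ) : Matrix (Fin N) (Fin N) ℂ :=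
  (2 * Complex.I)⁻¹ • (G - Gᴴ)

/-- Bessel function of the first kind of order one (integral representation). -/
noncomputable def besselJ1 (x : ℝ) : ℝ :=
  (1 / Real.pi) * ∫ θ in (0:ℝ)..Real.pi, Real.cos (θ - x * Real.sin θ)

/-- Semicircle density on `[-2,2]`. -/
noncomputable def rhoSC (x : ℝ) : ℝ := (1 / (2 * Real.pi)) * Real.sqrt (4 - x ^ 2)

/-- Stieltjes transform of the semicircle law. -/
noncomputable def mSC (z : ℂ) : ℂ := ∫ x in (-2:ℝ)..2, (rhoSC x : ℂ) / (x - z)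

/-- `φ(t) = J₁(2t)/t`, with `φ(0) = 1`. -/
noncomputable def phiSC (t : ℝ) : ℝ := if t = 0 then 1 else besselJ1 (2 * t) / t

set_option maxHeartbeats 1000000
set_option synthInstance.maxHeartbeats 400000

namespace WA
variable {N : ℕ}

lemma conj_pow {n : Type*} [Fintype n] [DecidableEq n] (U D : Matrix n n ℂ)
    (hU : star U * U = 1) (p : ℕ) (hp : 0 < p) :
    (U * D * star U) ^ p = U * D ^ p * star U := by
  induction p with
  | zero => omega
  | succ k ih =>
    rcases Nat.eq_zero_or_pos k with hk | hk
    · subst hk; simp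
    · rw [pow_succ, ih hk, pow_succ]
      calc U * D ^ k * star U * (U * D * star U)
          = U * D ^ k * (star U * U) * D * star U := by simp only [mul_assoc]
        _ = U * (D ^ k * D) * star U := by rw [hU]; simp only [mul_one, mul_assoc]

lemma trace_pow_eq (M : Matrix (Fin N) (Fin N) ℂ) (hM : M.IsHermitian) (p : ℕ) (hp : 0 < p) :
    (M ^ p).trace = ∑ i, ((hM.eigenvalues i : ℂ)) ^ p := by
  have hU : star (hM.eigenvectorUnitary : Matrix (Fin N) (Fin N) ℂ) *
      (hM.eigenvectorUnitary : Matrix (Fin N) (Fin N) ℂ) = 1 := by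
    exact Matrix.mem_unitaryGroup_iff'.mp (hM.eigenvectorUnitary).2
  conv_lhs => rw [hM.spectral_theorem, Unitary.conjStarAlgAut_apply]
  rw [conj_pow _ _ hU p hp, Matrix.trace_mul_comm, ← mul_assoc, hU, one_mul,
    Matrix.diagonal_pow, Matrix.trace_diagonal]
  simp [Function.comp]

/-- singular values -/
noncomputable def sval (A : Matrix (Fin N) (Fin N) ℂ) : Fin N → ℝ :=
  Real.sqrt ∘ (Matrix.posSemidef_self_mul_conjTranspose A).1.eigenvalues

lemma sval_nonneg (A : Matrix (Fin N) (Fin N) ℂ) (i : Fin N) : 0 ≤ sval A i :=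
  Real.sqrt_nonneg _

lemma schatten_eq (A : Matrix (Fin N) (Fin N) ℂ) (p : ℕ) (hp : 0 < p) :
    schatten p A = ((N:ℝ)⁻¹ * ∑ i, sval A i ^ p) ^ ((p : ℝ)⁻¹) := by
  unfold schatten ntr matAbs sval
  have hU : star ((Matrix.posSemidef_self_mul_conjTranspose A).1.eigenvectorUnitary :
      Matrix (Fin N) (Fin N) ℂ) *
      ((Matrix.posSemidef_self_mul_conjTranspose A).1.eigenvectorUnitary :
      Matrix (Fin N) (Fin N) ℂ) = 1 :=
    Matrix.mem_unitaryGroup_iff'.mp ((Matrix.posSemidef_self_mul_conjTranspose A).1.eigenvectorUnitary).2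
  rw [conj_pow _ _ hU p hp, Matrix.trace_mul_comm, ← mul_assoc, hU, one_mul,
    Matrix.diagonal_pow, Matrix.trace_diagonal]
  congr 1
  simp only [Pi.pow_apply, Function.comp_apply, ← Complex.ofReal_pow, ← Complex.ofReal_sum]
  rw [show ((N:ℂ))⁻¹ = (((N:ℝ)⁻¹ : ℝ) : ℂ) by push_cast; rfl, ← Complex.ofReal_mul,
    Complex.ofReal_re]

open scoped Matrix.Norms.L2Operator in
lemma sval_le_opNorm (A : Matrix (Fin N) (Fin N) ℂ) (i : Fin N) : sval A i ≤ opNorm A := by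
  have hop : opNorm A = ‖A‖ := rfl
  rw [hop]
  set H := A * Aᴴ with hHdef
  have hH : H.IsHermitian := (Matrix.posSemidef_self_mul_conjTranspose A).1
  have h2 : ‖H‖ ≤ ‖A‖ * ‖A‖ := by
    have e2 : ‖A * Aᴴ‖ ≤ ‖A‖ * ‖Aᴴ‖ := Matrix.l2_opNorm_mul A Aᴴ
    have e3 : ‖Aᴴ‖ = ‖A‖ := Matrix.l2_opNorm_conjTranspose A
    rw [e3] at e2; exact e2
  set v := hH.eigenvectorBasis i with hv
  have hv1 : ‖v‖ = 1 := hH.eigenvectorBasis.orthonormal.1 i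
  have hmv : H *ᵥ ⇑v = hH.eigenvalues i • ⇑v := hH.mulVec_eigenvectorBasis i
  have hb := Matrix.l2_opNorm_mulVec H v
  rw [hv1, mul_one] at hb
  rw [hmv] at hb
  rw [show (EuclideanSpace.equiv (Fin N) ℂ).symm (hH.eigenvalues i • ⇑v)
      = hH.eigenvalues i • v from rfl, norm_smul, hv1, mul_one, Real.norm_eq_abs] at hb
  have hlam : hH.eigenvalues i ≤ ‖A‖ * ‖A‖ := le_trans (le_trans (le_abs_self _) hb) h2
  unfold sval
  rw [Function.comp_apply,
    show ‖A‖ = Real.sqrt (‖A‖ * ‖A‖) from (Real.sqrt_mul_self (norm_nonneg _)).symm]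
  exact Real.sqrt_le_sqrt hlam

end WA

namespace WA

lemma amgm (a c α β : ℝ) (ha : 0 ≤ a) (hc : 0 ≤ c) (hα : 0 ≤ α) (hβ : 0 ≤ β) (h : α + β = 1) :
    a ^ α * c ^ β ≤ a + c := by
  have := Real.geom_mean_le_arith_mean2_weighted hα hβ ha hc h
  nlinarith

lemma holder_aux {n : ℕ} (μ : Fin n → ℝ) (hμ : ∀ i, 0 ≤ μ i) {p q : ℕ} (h2 : 2 < p)
    (hpq : p < q) :
    (∑ i, μ i ^ p) ≤ (∑ i, μ i ^ 2) ^ (((q:ℝ) - p)/((q:ℝ) - 2)) *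
      (∑ i, μ i ^ q) ^ (1 - ((q:ℝ) - p)/((q:ℝ) - 2)) := by
  set θ : ℝ := ((q:ℝ) - p)/((q:ℝ) - 2) with hθdef
  have hp2 : (2:ℝ) < p := by exact_mod_cast h2
  have hpq' : (p:ℝ) < q := by exact_mod_cast hpq
  have hq2 : (2:ℝ) < q := by linarith
  have hq2' : (q:ℝ) - 2 ≠ 0 := by linarith
  have hθ0 : 0 < θ := div_pos (by linarith) (by linarith)
  have hθ1 : θ < 1 := by rw [hθdef, div_lt_one (by linarith)]; linarith
  have hsum : (2:ℝ)*θ + (q:ℝ)*(1-θ) = p := by rw [hθdef]; field_simp; ring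
  have hpne : (2:ℝ)*θ + (q:ℝ)*(1-θ) ≠ 0 := by rw [hsum]; positivity
  have hconj : Real.HolderConjugate θ⁻¹ (1-θ)⁻¹ :=
    ⟨by rw [inv_inv, inv_inv]; ring, inv_pos.mpr hθ0, inv_pos.mpr (by linarith)⟩
  set f : Fin n → ℝ := fun i => μ i ^ ((2:ℝ)*θ) with hf
  set g : Fin n → ℝ := fun i => μ i ^ ((q:ℝ)*(1-θ)) with hg
  have key := Real.inner_le_Lp_mul_Lq (s := Finset.univ) (f := f) (g := g) hconj
  have e1 : ∀ i, f i * g i = μ i ^ p := by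
    intro i
    rw [← Real.rpow_add' (hμ i) hpne, hsum, Real.rpow_natCast]
  have e2 : ∀ i, |f i| ^ θ⁻¹ = μ i ^ 2 := by
    intro i
    rw [abs_of_nonneg (Real.rpow_nonneg (hμ i) _), ← Real.rpow_mul (hμ i),
      mul_assoc, mul_inv_cancel₀ hθ0.ne', mul_one]
    rw [show ((2:ℝ)) = ((2:ℕ):ℝ) by norm_num, Real.rpow_natCast]
  have e3 : ∀ i, |g i| ^ (1-θ)⁻¹ = μ i ^ q := by
    intro i
    rw [abs_of_nonneg (Real.rpow_nonneg (hμ i) _), ← Real.rpow_mul (hμ i),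
      mul_assoc, mul_inv_cancel₀ (by linarith : (1:ℝ)-θ ≠ 0), mul_one, Real.rpow_natCast]
  simp only [e1, e2, e3, one_div, inv_inv] at key
  exact key

end WA

namespace WA2
open WA

lemma interp_fin {n : ℕ} (μ : Fin n → ℝ) (hμ : ∀ i, 0 ≤ μ i) (c' ℓ : ℝ) (hc : 0 ≤ c')
    (hℓ : 0 < ℓ) {p q : ℕ} (h2 : 2 ≤ p) (hpq : p ≤ q) :
    (c' * ∑ i, μ i ^ p) ^ ((p:ℝ)⁻¹) / ℓ ^ ((p:ℝ)⁻¹) ≤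
      (c' * ∑ i, μ i ^ 2) ^ ((2:ℝ)⁻¹) / ℓ ^ ((2:ℝ)⁻¹) +
      (c' * ∑ i, μ i ^ q) ^ ((q:ℝ)⁻¹) / ℓ ^ ((q:ℝ)⁻¹) := by
  have S2nn : 0 ≤ c' * ∑ i, μ i ^ 2 :=
    mul_nonneg hc (Finset.sum_nonneg fun i _ => pow_nonneg (hμ i) _)
  have Sqnn : 0 ≤ c' * ∑ i, μ i ^ q :=
    mul_nonneg hc (Finset.sum_nonneg fun i _ => pow_nonneg (hμ i) _)
  have Spnn : 0 ≤ c' * ∑ i, μ i ^ p :=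
    mul_nonneg hc (Finset.sum_nonneg fun i _ => pow_nonneg (hμ i) _)
  have ha : 0 ≤ (c' * ∑ i, μ i ^ 2) ^ ((2:ℝ)⁻¹) / ℓ ^ ((2:ℝ)⁻¹) :=
    div_nonneg (Real.rpow_nonneg S2nn _) (Real.rpow_nonneg hℓ.le _)
  have hcn : 0 ≤ (c' * ∑ i, μ i ^ q) ^ ((q:ℝ)⁻¹) / ℓ ^ ((q:ℝ)⁻¹) :=
    div_nonneg (Real.rpow_nonneg Sqnn _) (Real.rpow_nonneg hℓ.le _)
  rcases h2.eq_or_lt with rfl | h2'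
  · exact le_add_of_nonneg_right hcn
  rcases hpq.eq_or_lt with rfl | hpq'
  · exact le_add_of_nonneg_left ha
  -- now 2 < p < q
  set θ : ℝ := ((q:ℝ) - p)/((q:ℝ) - 2) with hθdef
  have hp2 : (2:ℝ) < p := by exact_mod_cast h2'
  have hpqr : (p:ℝ) < q := by exact_mod_cast hpq'
  have hq2 : (2:ℝ) < q := by linarith
  have hθ0 : 0 ≤ θ := div_nonneg (by linarith) (by linarith)
  have hθ1 : θ ≤ 1 := by rw [hθdef, div_le_one (by linarith)]; linarith
  have hq2' : (q:ℝ) - 2 ≠ 0 := by linarith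
  have hsum : (2:ℝ)*θ + (q:ℝ)*(1-θ) = p := by
    rw [hθdef]; field_simp; ring
  have key := holder_aux μ hμ h2' hpq'
  set X := ∑ i, μ i ^ 2
  set Y := ∑ i, μ i ^ q
  have Xnn : 0 ≤ X := Finset.sum_nonneg fun i _ => pow_nonneg (hμ i) _
  have Ynn : 0 ≤ Y := Finset.sum_nonneg fun i _ => pow_nonneg (hμ i) _
  have hc2 : c' = c' ^ θ * c' ^ (1-θ) := by
    have h1 : θ + (1 - θ) = 1 := by ring
    rw [← Real.rpow_add' hc (by rw [h1]; norm_num), h1, Real.rpow_one]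
  have hSp : c' * ∑ i, μ i ^ p ≤ (c' * X) ^ θ * (c' * Y) ^ (1-θ) := by
    calc c' * ∑ i, μ i ^ p ≤ c' * (X ^ θ * Y ^ (1-θ)) :=
          mul_le_mul_of_nonneg_left key hc
      _ = (c' ^ θ * c' ^ (1-θ)) * (X ^ θ * Y ^ (1-θ)) := by rw [← hc2]
      _ = (c' ^ θ * X ^ θ) * (c' ^ (1-θ) * Y ^ (1-θ)) := by ring
      _ = (c' * X) ^ θ * (c' * Y) ^ (1-θ) := by
          rw [Real.mul_rpow hc Xnn, Real.mul_rpow hc Ynn]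
  set S2 := c' * X
  set Sq := c' * Y
  have hS2 : 0 ≤ S2 := S2nn
  have hSq : 0 ≤ Sq := Sqnn
  set α : ℝ := 2*θ/(p:ℝ) with hαdef
  set β : ℝ := (q:ℝ)*(1-θ)/(p:ℝ) with hβdef
  have hpne : (p:ℝ) ≠ 0 := by positivity
  have hqne : (q:ℝ) ≠ 0 := by positivity
  have hαβ : α + β = 1 := by
    rw [hαdef, hβdef, ← add_div, div_eq_one_iff_eq hpne]; linarith [hsum]
  have hα0 : 0 ≤ α := by positivity
  have hβ0 : 0 ≤ β := by
    apply div_nonneg (mul_nonneg (by positivity) (by linarith)) (by positivity)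
  have step1 : (c' * ∑ i, μ i ^ p) ^ ((p:ℝ)⁻¹) / ℓ ^ ((p:ℝ)⁻¹) ≤
      (S2 ^ θ * Sq ^ (1-θ)) ^ ((p:ℝ)⁻¹) / ℓ ^ ((p:ℝ)⁻¹) :=
    (div_le_div_iff_of_pos_right (Real.rpow_pos_of_pos hℓ _)).mpr
      (Real.rpow_le_rpow Spnn hSp (by positivity))
  refine step1.trans ?_
  have step2 : (S2 ^ θ * Sq ^ (1-θ)) ^ ((p:ℝ)⁻¹) / ℓ ^ ((p:ℝ)⁻¹) =
      (S2 ^ ((2:ℝ)⁻¹) / ℓ ^ ((2:ℝ)⁻¹)) ^ α * (Sq ^ ((q:ℝ)⁻¹) / ℓ ^ ((q:ℝ)⁻¹)) ^ β := by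
    rw [Real.mul_rpow (Real.rpow_nonneg hS2 _) (Real.rpow_nonneg hSq _),
      ← Real.rpow_mul hS2, ← Real.rpow_mul hSq,
      Real.div_rpow (Real.rpow_nonneg hS2 _) (Real.rpow_nonneg hℓ.le _),
      Real.div_rpow (Real.rpow_nonneg hSq _) (Real.rpow_nonneg hℓ.le _),
      ← Real.rpow_mul hS2, ← Real.rpow_mul hSq, ← Real.rpow_mul hℓ.le, ← Real.rpow_mul hℓ.le,
      div_mul_div_comm, ← Real.rpow_add hℓ]
    rw [show (2:ℝ)⁻¹ * α = θ * (p:ℝ)⁻¹ by rw [hαdef]; field_simp,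
      show (q:ℝ)⁻¹ * β = (1-θ) * (p:ℝ)⁻¹ by rw [hβdef]; field_simp,
      show θ * (p:ℝ)⁻¹ + (1-θ) * (p:ℝ)⁻¹ = (p:ℝ)⁻¹ by ring]
  rw [step2]
  exact amgm _ _ α β (div_nonneg (Real.rpow_nonneg hS2 _) (Real.rpow_nonneg hℓ.le _))
    (div_nonneg (Real.rpow_nonneg hSq _) (Real.rpow_nonneg hℓ.le _)) hα0 hβ0 hαβ

lemma interp_top {n : ℕ} (μ : Fin n → ℝ) (hμ : ∀ i, 0 ≤ μ i) (c' ℓ K : ℝ) (hc : 0 ≤ c')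
    (hℓ : 0 < ℓ) (hK0 : 0 ≤ K) (hK : ∀ i, μ i ≤ K) {p : ℕ} (h2 : 2 ≤ p) :
    (c' * ∑ i, μ i ^ p) ^ ((p:ℝ)⁻¹) / ℓ ^ ((p:ℝ)⁻¹) ≤
      (c' * ∑ i, μ i ^ 2) ^ ((2:ℝ)⁻¹) / ℓ ^ ((2:ℝ)⁻¹) + K := by
  set X := ∑ i, μ i ^ 2 with hX
  have Xnn : 0 ≤ X := Finset.sum_nonneg fun i _ => pow_nonneg (hμ i) _
  have S2nn : 0 ≤ c' * X := mul_nonneg hc Xnn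
  have Spnn : 0 ≤ c' * ∑ i, μ i ^ p :=
    mul_nonneg hc (Finset.sum_nonneg fun i _ => pow_nonneg (hμ i) _)
  have hp0 : (0:ℝ) < p := by positivity
  have hpne : (p:ℝ) ≠ 0 := ne_of_gt hp0
  have hSp : c' * ∑ i, μ i ^ p ≤ (c' * X) * K ^ (p - 2) := by
    have : ∑ i, μ i ^ p ≤ (∑ i, μ i ^ 2) * K ^ (p - 2) := by
      rw [Finset.sum_mul]
      apply Finset.sum_le_sum
      intro i _
      calc μ i ^ p = μ i ^ 2 * μ i ^ (p - 2) := by rw [← pow_add]; congr 1; omega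
        _ ≤ μ i ^ 2 * K ^ (p - 2) := by
            apply mul_le_mul_of_nonneg_left (pow_le_pow_left₀ (hμ i) (hK i) _)
              (pow_nonneg (hμ i) 2)
    calc c' * ∑ i, μ i ^ p ≤ c' * ((∑ i, μ i ^ 2) * K ^ (p - 2)) :=
          mul_le_mul_of_nonneg_left this hc
      _ = (c' * X) * K ^ (p - 2) := by rw [hX]; ring
  set α : ℝ := 2/(p:ℝ) with hαdef
  set β : ℝ := ((p:ℝ) - 2)/(p:ℝ) with hβdef
  have hαβ : α + β = 1 := by rw [hαdef, hβdef]; field_simp; ring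
  have hα0 : 0 ≤ α := by positivity
  have hp2 : (2:ℝ) ≤ p := by exact_mod_cast h2
  have hβ0 : 0 ≤ β := div_nonneg (by linarith) hp0.le
  have step1 : (c' * ∑ i, μ i ^ p) ^ ((p:ℝ)⁻¹) / ℓ ^ ((p:ℝ)⁻¹) ≤
      ((c' * X) * K ^ (p - 2)) ^ ((p:ℝ)⁻¹) / ℓ ^ ((p:ℝ)⁻¹) :=
    (div_le_div_iff_of_pos_right (Real.rpow_pos_of_pos hℓ _)).mpr
      (Real.rpow_le_rpow Spnn hSp (by positivity))
  refine step1.trans ?_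
  have hcast : (K:ℝ) ^ (p - 2) = K ^ (((p:ℝ)) - 2) := by
    rw [← Real.rpow_natCast K (p - 2)]
    congr 1
    have : ((p - 2 : ℕ) : ℝ) = (p:ℝ) - 2 := by
      have := h2; push_cast [Nat.cast_sub h2]; ring
    rw [this]
  have step2 : ((c' * X) * K ^ (p - 2)) ^ ((p:ℝ)⁻¹) / ℓ ^ ((p:ℝ)⁻¹) =
      ((c' * X) ^ ((2:ℝ)⁻¹) / ℓ ^ ((2:ℝ)⁻¹)) ^ α * K ^ β := by
    rw [hcast, Real.mul_rpow S2nn (Real.rpow_nonneg hK0 _), ← Real.rpow_mul hK0,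
      Real.div_rpow (Real.rpow_nonneg S2nn _) (Real.rpow_nonneg hℓ.le _),
      ← Real.rpow_mul S2nn, ← Real.rpow_mul hℓ.le]
    rw [show (2:ℝ)⁻¹ * α = (p:ℝ)⁻¹ by rw [hαdef]; field_simp,
      show ((p:ℝ) - 2) * (p:ℝ)⁻¹ = β by rw [hβdef]; field_simp]
    ring
  rw [step2]
  exact amgm _ _ α β (div_nonneg (Real.rpow_nonneg S2nn _) (Real.rpow_nonneg hℓ.le _)) hK0 hα0
    hβ0 hαβ

end WA2

/-- `|||B|||_{p,ℓ} ≲ |||B|||_{q,ℓ}` for `2 ≤ p ≤ q ≤ ∞`. -/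
theorem wnorm_mono :
    ∃ C : ℝ, 0 < C ∧ ∀ (N : ℕ) (B : Matrix (Fin N) (Fin N) ℂ) (ℓ : ℝ) (p q : ℕ∞),
      0 < ℓ → 2 ≤ p → p ≤ q →
      wnorm p ℓ B ≤ C * wnorm q ℓ B := by
  refine ⟨2, by norm_num, ?_⟩
  intro N B ℓ p q hℓ h2p hpq
  have hμnn : ∀ i, 0 ≤ WA.sval B i := WA.sval_nonneg B
  have hc : (0:ℝ) ≤ (N:ℝ)⁻¹ := by positivity
  have hKnn : 0 ≤ opNorm B := norm_nonneg _
  have hKle : ∀ i, WA.sval B i ≤ opNorm B := WA.sval_le_opNorm B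
  have hs2 : schatten 2 B = ((N:ℝ)⁻¹ * ∑ i, WA.sval B i ^ 2) ^ ((2:ℝ)⁻¹) := by
    have := WA.schatten_eq B 2 (by norm_num)
    simpa using this
  have hann : 0 ≤ schatten 2 B / ℓ ^ ((2:ℝ)⁻¹) := by
    rw [hs2]
    exact div_nonneg (Real.rpow_nonneg (mul_nonneg hc (Finset.sum_nonneg fun i _ =>
      pow_nonneg (hμnn i) _)) _) (Real.rpow_nonneg hℓ.le _)
  cases p with
  | top =>
    have hq : q = ⊤ := top_le_iff.mp hpq
    subst hq
    simp only [wnorm, ENat.recTopCoe_top]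
    linarith [hann, hKnn]
  | coe m =>
    have h2m : 2 ≤ m := by exact_mod_cast h2p
    have hm0 : 0 < m := by omega
    have hsm : schatten m B = ((N:ℝ)⁻¹ * ∑ i, WA.sval B i ^ m) ^ ((m:ℝ)⁻¹) :=
      WA.schatten_eq B m hm0
    cases q with
    | top =>
      simp only [wnorm, ENat.recTopCoe_top, ENat.recTopCoe_coe]
      have key := WA2.interp_top (WA.sval B) hμnn ((N:ℝ)⁻¹) ℓ (opNorm B) hc hℓ hKnn hKle h2m
      rw [← hsm, ← hs2] at key
      linarith [hann, hKnn]
    | coe n =>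
      have hmn : m ≤ n := by exact_mod_cast hpq
      have hn0 : 0 < n := by omega
      have hsn : schatten n B = ((N:ℝ)⁻¹ * ∑ i, WA.sval B i ^ n) ^ ((n:ℝ)⁻¹) :=
        WA.schatten_eq B n hn0
      simp only [wnorm, ENat.recTopCoe_coe]
      have key := WA2.interp_fin (WA.sval B) hμnn ((N:ℝ)⁻¹) ℓ hc hℓ h2m hmn
      rw [← hsm, ← hs2, ← hsn] at key
      have htn : 0 ≤ schatten n B / ℓ ^ ((n:ℝ)⁻¹) := by
        rw [hsn]
        exact div_nonneg (Real.rpow_nonneg (mul_nonneg hc (Finset.sum_nonneg fun i _ =>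
          pow_nonneg (hμnn i) _)) _) (Real.rpow_nonneg hℓ.le _)
      linarith [hann, htn]
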